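/- arXiv:0802.0433 — 2 statements merged into one kernel-verified Lean document; each statement's English description precedes it below -/
import Mathlib

section
/- Let Q^(S) and Q^(R) be the quantile functions of two GP distributions with parameters (μ_S, σ_S, ξ_S) and (μ_R, σ_R, ξ_R) respectively (all shapes nonzero). If Q^(S)(p) = C · Q^(R)(p) for all p ∈ (0,1) for some constant C > 0, then ξ_S = ξ_R, μ_S = C·μ_R, and σ_S = C·σ_R. -/
open Real Set

lemma quarter_rpow (t : ℝ) : ((1:ℝ)/4) ^ t = ((1:ℝ)/2) ^ t * ((1:ℝ)/2) ^ t := by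
  rw [show (1:ℝ)/4 = (1/2) * (1/2) by norm_num,
    Real.mul_rpow (by norm_num) (by norm_num)]

lemma eighth_rpow (t : ℝ) : ((1:ℝ)/8) ^ t = ((1:ℝ)/2) ^ t * ((1:ℝ)/2) ^ t * ((1:ℝ)/2) ^ t := by
  rw [show (1:ℝ)/8 = (1/2) * (1/2) * (1/2) by norm_num,
    Real.mul_rpow (by norm_num) (by norm_num),
    Real.mul_rpow (by norm_num) (by norm_num)]

lemma half_rpow_ne_one {t : ℝ} (ht : t ≠ 0) : ((1:ℝ)/2) ^ t ≠ 1 := by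
  intro hcontra
  have hlog : Real.log (((1:ℝ)/2) ^ t) = t * Real.log (1/2) :=
    Real.log_rpow (by norm_num) t
  rw [hcontra, Real.log_one] at hlog
  have hl2 : Real.log ((1:ℝ)/2) < 0 := Real.log_neg (by norm_num) (by norm_num)
  have := mul_eq_zero.mp hlog.symm
  rcases this with h1 | h1
  · exact ht h1
  · exact hl2.ne h1

/-- If the GP quantile functions of two GP distributions satisfy the index flood relation
`Q^(S)(p) = C · Q^(R)(p)` for all `p ∈ (0,1)`, with `C > 0`, then the shape parameters
coincide and the location and scale parameters scale by `C`. -/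
theorem index_flood_gp_parameters (μS σS ξS μR σR ξR C : ℝ)
    (hσS : 0 < σS) (hσR : 0 < σR) (hξS : ξS ≠ 0) (hξR : ξR ≠ 0) (hC : 0 < C)
    (h : ∀ p ∈ Set.Ioo (0 : ℝ) 1,
      μS + σS / ξS * ((1 - p) ^ (-ξS) - 1) = C * (μR + σR / ξR * ((1 - p) ^ (-ξR) - 1))) :
    ξS = ξR ∧ μS = C * μR ∧ σS = C * σR := by
  set u : ℝ := ((1:ℝ)/2) ^ (-ξS) with hu
  set v : ℝ := ((1:ℝ)/2) ^ (-ξR) with hv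
  have hupos : 0 < u := Real.rpow_pos_of_pos (by norm_num) _
  have hvpos : 0 < v := Real.rpow_pos_of_pos (by norm_num) _
  have hune : u ≠ 1 := half_rpow_ne_one (neg_ne_zero.mpr hξS)
  have hvne : v ≠ 1 := half_rpow_ne_one (neg_ne_zero.mpr hξR)
  set a : ℝ := σS / ξS with ha
  set d : ℝ := C * (σR / ξR) with hd
  have hane : a ≠ 0 := div_ne_zero hσS.ne' hξS
  have hdne : d ≠ 0 := mul_ne_zero hC.ne' (div_ne_zero hσR.ne' hξR)
  have e1 := h (1/2) ⟨by norm_num, by norm_num⟩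
  have e2 := h (3/4) ⟨by norm_num, by norm_num⟩
  have e3 := h (7/8) ⟨by norm_num, by norm_num⟩
  rw [show (1:ℝ) - 1/2 = 1/2 by norm_num] at e1
  rw [show (1:ℝ) - 3/4 = 1/4 by norm_num, quarter_rpow, quarter_rpow] at e2
  rw [show (1:ℝ) - 7/8 = 1/8 by norm_num, eighth_rpow, eighth_rpow] at e3
  rw [← hu, ← hv] at e1 e2 e3
  -- e1 : μS + a * (u - 1) = C * (μR + σR/ξR * (v - 1))
  have A : a * u * (u - 1) = d * v * (v - 1) := by linear_combination e2 - e1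
  have B : a * u * (u - 1) * (u + 1) = d * v * (v - 1) * (v + 1) := by
    linear_combination e3 - e1
  have huv : u = v := by
    have h4 : d * v * (v - 1) * (u - v) = 0 := by linear_combination B - (u + 1) * A
    have := mul_eq_zero.mp h4
    rcases this with h5 | h5
    · exact absurd h5 (mul_ne_zero (mul_ne_zero hdne hvpos.ne') (sub_ne_zero.mpr hvne))
    · linarith [sub_eq_zero.mp h5]
  have hξ : ξS = ξR := by
    have hlog : (-ξS) * Real.log ((1:ℝ)/2) = (-ξR) * Real.log ((1:ℝ)/2) := by
      rw [← Real.log_rpow (by norm_num : (0:ℝ) < 1/2), ← Real.log_rpow (by norm_num : (0:ℝ) < 1/2)]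
      rw [← hu, ← hv, huv]
    have hl2 : Real.log ((1:ℝ)/2) ≠ 0 := (Real.log_neg (by norm_num) (by norm_num)).ne
    have := mul_right_cancel₀ hl2 hlog
    linarith
  have had : a = d := by
    have h6 : (a - d) * (v * (v - 1)) = 0 := by
      rw [huv] at A; linear_combination A
    rcases mul_eq_zero.mp h6 with h7 | h7
    · linarith [sub_eq_zero.mp h7]
    · exact absurd h7 (mul_ne_zero hvpos.ne' (sub_ne_zero.mpr hvne))
  have hσ : σS = C * σR := by
    rw [ha, hd, hξ] at had
    field_simp at had
    linarith
  refine ⟨hξ, ?_, hσ⟩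
  have hμ : μS + a * (u - 1) = C * μR + d * (v - 1) := by linear_combination e1
  rw [huv, had] at hμ
  linarith
end

section
/- If X is GP distributed with parameters (μ, σ, ξ), ξ ≠ 0, and u > μ satisfies 1 + ξ(u − μ)/σ > 0, then conditionally on X > u, the excess X − u is GP distributed with location 0, scale σ + ξ(u − μ), and the same shape ξ (threshold stability of the GP family). -/
open MeasureTheory Real Set

/-- CDF of the Generalized Pareto distribution with location `μ`, scale `σ`, shape `ξ`. -/
noncomputable def gpCDF (μ σ ξ x : ℝ) : ℝ :=
  if x < μ then 0
  else if 0 < 1 + ξ * (x - μ) / σ then 1 - (1 + ξ * (x - μ) / σ) ^ (-1 / ξ)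
  else 1

/-- Threshold stability of the GP family: if `X` is GP`(μ, σ, ξ)` and `u > μ` lies in the
support, then conditionally on `X > u` the excess `X - u` is GP with location `0`,
scale `σ + ξ(u - μ)` and the same shape `ξ`. -/
theorem gp_threshold_stability {Ω : Type*} [MeasurableSpace Ω]
    (P : Measure Ω) [IsProbabilityMeasure P]
    (X : Ω → ℝ) (hX : Measurable X) (μ σ ξ u : ℝ) (hσ : 0 < σ) (hξ : ξ ≠ 0)
    (hu : μ < u) (hsupp : 0 < 1 + ξ * (u - μ) / σ)
    (hGP : ∀ x : ℝ, P {ω | X ω ≤ x} = ENNReal.ofReal (gpCDF μ σ ξ x)) :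
    ∀ y : ℝ, P {ω | u < X ω ∧ X ω - u ≤ y} / P {ω | u < X ω}
      = ENNReal.ofReal (gpCDF 0 (σ + ξ * (u - μ)) ξ y) := by
  intro y
  have hσne : σ ≠ 0 := ne_of_gt hσ
  set s : ℝ := 1 + ξ * (u - μ) / σ with hs_def
  set σ' : ℝ := σ + ξ * (u - μ) with hσ'_def
  have hσ's : σ' = σ * s := by rw [hσ'_def, hs_def]; field_simp
  have hσ'pos : 0 < σ' := by rw [hσ's]; exact mul_pos hσ hsupp
  have hσ'ne : σ' ≠ 0 := ne_of_gt hσ'pos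
  have hepos : 0 < s ^ (-1 / ξ) := Real.rpow_pos_of_pos hsupp _
  have he1 : s ^ (-1 / ξ) ≤ 1 := by
    rcases hξ.lt_or_gt with hneg | hpos
    · have h1 : ξ * (u - μ) / σ ≤ 0 := by
        apply div_nonpos_of_nonpos_of_nonneg _ hσ.le
        exact mul_nonpos_of_nonpos_of_nonneg hneg.le (by linarith)
      have hs1 : s ≤ 1 := by rw [hs_def]; linarith
      exact Real.rpow_le_one hsupp.le hs1
        (by rw [div_nonneg_iff]; right; exact ⟨by norm_num, hneg.le⟩)
    · have h1 : 0 ≤ ξ * (u - μ) / σ :=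
        div_nonneg (mul_nonneg hpos.le (by linarith)) hσ.le
      have hs1 : 1 ≤ s := by rw [hs_def]; linarith
      exact Real.rpow_le_one_of_one_le_of_nonpos hs1
        (div_nonpos_of_nonpos_of_nonneg (by norm_num) hpos.le)
  have hFu : gpCDF μ σ ξ u = 1 - s ^ (-1 / ξ) := by
    rw [gpCDF, if_neg (not_lt.2 hu.le), if_pos hsupp]
  have hFu0 : 0 ≤ gpCDF μ σ ξ u := by rw [hFu]; linarith
  have hms : ∀ a : ℝ, MeasurableSet {ω | X ω ≤ a} := fun a =>
    measurableSet_le hX measurable_const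
  have hcompl : {ω | u < X ω} = {ω | X ω ≤ u}ᶜ := by
    ext ω; simp [not_le]
  have hden : P {ω | u < X ω} = ENNReal.ofReal (s ^ (-1 / ξ)) := by
    rw [hcompl, measure_compl (hms u) (measure_ne_top _ _), measure_univ, hGP u, hFu,
      ← ENNReal.ofReal_one, ← ENNReal.ofReal_sub _ (by linarith)]
    norm_num
  rcases lt_or_ge y 0 with hy | hy
  · have hempty : {ω | u < X ω ∧ X ω - u ≤ y} = ∅ := by
      ext ω; simp only [mem_setOf_eq, mem_empty_iff_false, iff_false, not_and, not_le]
      intro h1; linarith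
    rw [hempty]
    simp [gpCDF, hy]
  · -- y ≥ 0
    have hset : {ω | u < X ω ∧ X ω - u ≤ y} = {ω | X ω ≤ u + y} \ {ω | X ω ≤ u} := by
      ext ω
      simp only [mem_setOf_eq, mem_diff, not_le]
      constructor
      · rintro ⟨h1, h2⟩; exact ⟨by linarith, h1⟩
      · rintro ⟨h1, h2⟩; exact ⟨h2, by linarith⟩
    have hsub : {ω | X ω ≤ u} ⊆ {ω | X ω ≤ u + y} := by
      intro ω h; simp only [mem_setOf_eq] at *; linarith
    have hnum : P {ω | u < X ω ∧ X ω - u ≤ y}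
        = ENNReal.ofReal (gpCDF μ σ ξ (u + y) - gpCDF μ σ ξ u) := by
      rw [hset, measure_diff hsub ((hms u).nullMeasurableSet)
        (measure_ne_top _ _), hGP, hGP, ← ENNReal.ofReal_sub _ hFu0]
    rw [hnum, hden, ← ENNReal.ofReal_div_of_pos hepos]
    congr 1
    have hnm : ¬ (u + y < μ) := by linarith
    have hkey : 1 + ξ * (u + y - μ) / σ = s * (1 + ξ * (y - 0) / σ') := by
      rw [hσ's, mul_add, mul_one, mul_div_assoc', mul_comm s (ξ * (y - 0)),
        mul_div_mul_right _ _ hsupp.ne', hs_def]; ring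
    have hny : ¬ (y < (0:ℝ)) := not_lt.2 hy
    rcases lt_or_ge 0 (1 + ξ * (y - 0) / σ') with hw | hw
    · have ht : 0 < 1 + ξ * (u + y - μ) / σ := by rw [hkey]; exact mul_pos hsupp hw
      have hrw : (1 + ξ * (u + y - μ) / σ) ^ (-1 / ξ)
          = s ^ (-1 / ξ) * (1 + ξ * (y - 0) / σ') ^ (-1 / ξ) := by
        rw [hkey, Real.mul_rpow hsupp.le hw.le]
      rw [hFu, gpCDF, gpCDF, if_neg hnm, if_pos ht, if_neg hny, if_pos hw, hrw]
      field_simp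
      ring
    · have ht : ¬ (0 < 1 + ξ * (u + y - μ) / σ) := by
        rw [hkey]; push_neg
        exact mul_nonpos_of_nonneg_of_nonpos hsupp.le hw
      rw [hFu, gpCDF, gpCDF, if_neg hnm, if_neg ht, if_neg hny, if_neg (not_lt.2 hw)]
      field_simp
      ring
end
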